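/- arXiv:1303.4673 — 2 statements merged into one kernel-verified Lean document; each statement's English description precedes it below -/
import Mathlib

section
/- In a complete convex geometric graph of even order n, every almost-halving edge intersects every halving pair of edges. -/
open scoped Classical

abbrev Pt : Type := ℝ × ℝ

/-- No three distinct points of `S` are collinear. -/
def GenPos (S : Finset Pt) : Prop :=
  ∀ p ∈ S, ∀ q ∈ S, ∀ r ∈ S, p ≠ q → q ≠ r → p ≠ r → ¬ Collinear ℝ ({p, q, r} : Set Pt)

/-- The closed straight-line segment of an (unordered) edge. -/
noncomputable def seg2 : Sym2 Pt → Set Pt :=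
  Sym2.lift ⟨fun p q => segment ℝ p q, fun p q => segment_symm ℝ p q⟩

/-- Two edges intersect: they share a point (common endpoint or crossing). -/
def SInter (e f : Sym2 Pt) : Prop := (seg2 e ∩ seg2 f).Nonempty

/-- A geometric graph: vertices in general position, straight-line edges. -/
structure GeomGraph where
  verts : Finset Pt
  edges : Finset (Sym2 Pt)
  genpos : GenPos verts
  edge_mem : ∀ e ∈ edges, ∀ p ∈ e, p ∈ verts
  edge_ne : ∀ e ∈ edges, ¬ e.IsDiag

/-- A coloring is complete on edge set `E` if every pair of used colors appears
on a pair of intersecting edges. -/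
def CompleteOn (E : Finset (Sym2 Pt)) (c : Sym2 Pt → ℕ) : Prop :=
  ∀ i ∈ E.image c, ∀ j ∈ E.image c, i ≠ j →
    ∃ e ∈ E, ∃ f ∈ E, c e = i ∧ c f = j ∧ SInter e f

/-- A coloring is proper if same-colored edges are disjoint. -/
def ProperOn (E : Finset (Sym2 Pt)) (c : Sym2 Pt → ℕ) : Prop :=
  ∀ e ∈ E, ∀ f ∈ E, e ≠ f → c e = c f → ¬ SInter e f

/-- Points in convex position. -/
def ConvexPos (S : Finset Pt) : Prop :=
  ∀ p ∈ S, p ∉ convexHull ℝ ((S : Set Pt) \ {p})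

/-- Edge set of the complete geometric graph on `S`. -/
noncomputable def edgeSet (S : Finset Pt) : Finset (Sym2 Pt) :=
  S.sym2.filter (fun e => ¬ e.IsDiag)

def ShareEndpoint (e f : Sym2 Pt) : Prop := ∃ p : Pt, p ∈ e ∧ p ∈ f

def Crossing (e f : Sym2 Pt) : Prop := SInter e f ∧ ¬ ShareEndpoint e f

/-- Number of unordered pairs of distinct edges of `E` satisfying the
(symmetric) relation `P`. -/
noncomputable def pairCount (E : Finset (Sym2 Pt)) (P : Sym2 Pt → Sym2 Pt → Prop) : ℕ :=
  ((E ×ˢ E).filter (fun q => q.1 ≠ q.2 ∧ P q.1 q.2)).card / 2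

/-- The `k`-th vertex (clockwise) of the regular `n`-gon. -/
noncomputable def pt (n k : ℕ) : Pt :=
  (Real.cos (2 * Real.pi * k / n), -Real.sin (2 * Real.pi * k / n))

/-- Vertex set of the regular `n`-gon. -/
noncomputable def ngon (n : ℕ) : Finset Pt := (Finset.range n).image (pt n)

/-- `pq` is a halving edge of `S`: each open half-plane bounded by the line
through `p` and `q` contains at least `⌊(n-2)/2⌋` points of `S`. -/
def IsHalvingPts (S : Finset Pt) (p q : Pt) : Prop :=
  (S.card - 2) / 2 ≤ (S.filter (fun r =>
      0 < (q.1 - p.1) * (r.2 - p.2) - (q.2 - p.2) * (r.1 - p.1))).card ∧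
  (S.card - 2) / 2 ≤ (S.filter (fun r =>
      (q.1 - p.1) * (r.2 - p.2) - (q.2 - p.2) * (r.1 - p.1) < 0)).card

/-- The edge `e_{i,j}` of the regular `n`-gon is halving. -/
def Halving (n i j : ℕ) : Prop := IsHalvingPts (ngon n) (pt n i) (pt n j)

/-- The edges `e_{i,j}` and `e_{i',j'}` of the regular `n`-gon intersect. -/
def EInter (n i j i' j' : ℕ) : Prop :=
  (segment ℝ (pt n i) (pt n j) ∩ segment ℝ (pt n i') (pt n j')).Nonempty

/-- `(e_{i,j}, e_{j+1,k})` is a halving pair. -/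
def HalvingPair (n i j k : ℕ) : Prop :=
  pt n i ≠ pt n j ∧ pt n (j + 1) ≠ pt n k ∧ ¬ EInter n i j (j + 1) k ∧
  (Halving n i (j + 1) ∨ Halving n i k ∨ Halving n j k)


/-! ### Auxiliary machinery -/

open Real

noncomputable def cross3 (p q r : Pt) : ℝ :=
  (q.1 - p.1) * (r.2 - p.2) - (q.2 - p.2) * (r.1 - p.1)

lemma sin_key (x y : ℝ) :
    Real.sin (2*x) + Real.sin (2*y) + Real.sin (-(2*x+2*y))
      = -4 * Real.sin x * Real.sin y * Real.sin (-(x+y)) := by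
  rw [Real.sin_neg, Real.sin_neg, Real.sin_add, Real.sin_add, Real.sin_two_mul,
    Real.sin_two_mul, Real.cos_two_mul, Real.cos_two_mul]
  linear_combination (-4*Real.sin x*Real.cos x) * (Real.sin_sq_add_cos_sq y) +
    (-4*Real.sin y*Real.cos y) * (Real.sin_sq_add_cos_sq x)

lemma cross3_f (a b c : ℝ) :
    cross3 (Real.cos a, -Real.sin a) (Real.cos b, -Real.sin b) (Real.cos c, -Real.sin c)
      = -4 * Real.sin ((a-b)/2) * Real.sin ((b-c)/2) * Real.sin ((c-a)/2) := by
  have h1 : cross3 (Real.cos a, -Real.sin a) (Real.cos b, -Real.sin b) (Real.cos c, -Real.sin c)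
      = Real.sin (a-b) + Real.sin (b-c) + Real.sin (c-a) := by
    simp only [cross3, Real.sin_sub, Real.cos_sub]
    ring
  have h2 := sin_key ((a-b)/2) ((b-c)/2)
  rw [show 2*((a-b)/2) = a-b by ring, show 2*((b-c)/2) = b-c by ring] at h2
  rw [show -(a-b+(b-c)) = c-a by ring, show -((a-b)/2+(b-c)/2) = (c-a)/2 by ring] at h2
  rw [h1, h2]

lemma cross3_pt_eq (n x u v : ℕ) :
    cross3 (pt n x) (pt n (x+u)) (pt n (x+v))
      = 4 * Real.sin (π*u/n) * Real.sin (π*((u:ℝ)-v)/n) * Real.sin (π*v/n) := by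
  simp only [pt]
  rw [cross3_f]
  push_cast
  rw [show (2*π*(x:ℝ)/n - 2*π*((x:ℝ)+u)/n)/2 = -(π*u/n) by ring,
    show (2*π*((x:ℝ)+u)/n - 2*π*((x:ℝ)+v)/n)/2 = π*((u:ℝ)-v)/n by ring,
    show (2*π*((x:ℝ)+v)/n - 2*π*(x:ℝ)/n)/2 = π*v/n by ring, Real.sin_neg]
  ring

lemma sin_pos_frac {n : ℕ} {t : ℝ} (ht0 : 0 < t) (htn : t < n) : 0 < Real.sin (π*t/n) := by
  have hn : (0:ℝ) < n := lt_trans ht0 htn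
  apply Real.sin_pos_of_pos_of_lt_pi
  · positivity
  · rw [div_lt_iff₀ hn]
    nlinarith [Real.pi_pos]

lemma cross3_pt_pos {n x u v : ℕ} (hv0 : 0 < v) (hvu : v < u) (hun : u < n) :
    0 < cross3 (pt n x) (pt n (x+u)) (pt n (x+v)) := by
  rw [cross3_pt_eq]
  have h1 : 0 < Real.sin (π*(u:ℝ)/n) :=
    sin_pos_frac (by exact_mod_cast hv0.trans hvu) (by exact_mod_cast hun)
  have h3 : 0 < Real.sin (π*(v:ℝ)/n) :=
    sin_pos_frac (by exact_mod_cast hv0) (by exact_mod_cast hvu.trans hun)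
  have h2 : 0 < Real.sin (π*((u:ℝ)-v)/n) := by
    apply sin_pos_frac
    · have : (v:ℝ) < u := by exact_mod_cast hvu
      linarith
    · have h4 : (u:ℝ) < n := by exact_mod_cast hun
      have h5 : (0:ℝ) ≤ v := by positivity
      linarith
  positivity

lemma cross3_pt_neg {n x u v : ℕ} (hu0 : 0 < u) (huv : u < v) (hvn : v < n) :
    cross3 (pt n x) (pt n (x+u)) (pt n (x+v)) < 0 := by
  rw [cross3_pt_eq]
  have h1 : 0 < Real.sin (π*(u:ℝ)/n) :=
    sin_pos_frac (by exact_mod_cast hu0) (by exact_mod_cast huv.trans hvn)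
  have h3 : 0 < Real.sin (π*(v:ℝ)/n) :=
    sin_pos_frac (by exact_mod_cast hu0.trans huv) (by exact_mod_cast hvn)
  have h2 : Real.sin (π*((u:ℝ)-v)/n) < 0 := by
    rw [show π*((u:ℝ)-v)/n = -(π*((v:ℝ)-u)/n) by ring, Real.sin_neg, neg_lt, neg_zero]
    apply sin_pos_frac
    · have : (u:ℝ) < v := by exact_mod_cast huv
      linarith
    · have h4 : (v:ℝ) < n := by exact_mod_cast hvn
      have h5 : (0:ℝ) ≤ u := by positivity
      linarith
  nlinarith [mul_pos h1 h3]

lemma cross3_self₁ (p r : Pt) : cross3 p p r = 0 := by simp [cross3]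

lemma cross3_self₂ (p q : Pt) : cross3 p q q = 0 := by simp [cross3]; ring

lemma cross3_self₃ (p q : Pt) : cross3 p q p = 0 := by simp [cross3]

lemma pt_congr {n k l : ℕ} (h : k % n = l % n) : pt n k = pt n l := by
  rcases Nat.eq_zero_or_pos n with rfl | hn
  · rw [Nat.mod_zero, Nat.mod_zero] at h; rw [h]
  have key : ∀ j : ℕ, pt n j = pt n (j % n) := by
    intro j
    have hj : (j:ℝ) = (j % n : ℕ) + n * (j / n : ℕ) := by
      exact_mod_cast (Nat.mod_add_div j n).symm
    have hn' : (n:ℝ) ≠ 0 := by positivity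
    have harg : 2*π*(j:ℝ)/n = 2*π*((j % n : ℕ):ℝ)/n + (j/n : ℕ) * (2*π) := by
      rw [hj]; field_simp
    simp only [pt, harg, Real.cos_add_nat_mul_two_pi, Real.sin_add_nat_mul_two_pi]
  rw [key k, key l, h]

lemma pt_inj {n k l : ℕ} (hn : 0 < n) (hk : k < n) (hl : l < n) (h : pt n k = pt n l) : k = l := by
  have hc : Real.cos (2*π*k/n) = Real.cos (2*π*l/n) := by
    have := congrArg Prod.fst h; simpa [pt] using this
  have hs : Real.sin (2*π*k/n) = Real.sin (2*π*l/n) := by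
    have := congrArg Prod.snd h; simp only [pt] at this; linarith
  have hexp : Complex.exp ((2*π*k/n : ℝ) * Complex.I) = Complex.exp ((2*π*l/n : ℝ) * Complex.I) :=
    Complex.ext (by rw [Complex.exp_ofReal_mul_I_re, Complex.exp_ofReal_mul_I_re]; exact hc)
      (by rw [Complex.exp_ofReal_mul_I_im, Complex.exp_ofReal_mul_I_im]; exact hs)
  obtain ⟨t, ht⟩ := Complex.exp_eq_exp_iff_exists_int.mp hexp
  have hR : 2*π*(k:ℝ)/n = 2*π*(l:ℝ)/n + t * (2*π) := by
    have := congrArg Complex.im ht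
    simpa using this
  have hn' : (n:ℝ) ≠ 0 := by positivity
  have hpi := Real.pi_pos
  have hkl : (k:ℝ) - l = t * n := by
    field_simp at hR
    have h2pi : (2*π) ≠ 0 := by positivity
    exact sub_eq_of_eq_add' (mul_left_cancel₀ h2pi (by linear_combination (2*π) * hR))
  have hz : (k:ℤ) - l = t * n := by exact_mod_cast hkl
  have ht0 : t = 0 := by
    rcases le_or_gt 1 t with h1 | h1
    · exfalso
      nlinarith [hz, (show (k:ℤ) < n by exact_mod_cast hk), (show (0:ℤ) ≤ l by positivity),
        (show (0:ℤ) < n by exact_mod_cast hn)]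
    rcases le_or_gt t (-1) with h2 | h2
    · exfalso
      nlinarith [hz, (show (l:ℤ) < n by exact_mod_cast hl), (show (0:ℤ) ≤ (k:ℤ) by positivity),
        (show (0:ℤ) < n by exact_mod_cast hn)]
    omega
  rw [ht0] at hz
  omega

lemma seg_cross {p q r s : Pt}
    (h1 : cross3 r s p * cross3 r s q < 0)
    (h2 : cross3 p q r * cross3 p q s < 0) :
    (segment ℝ p q ∩ segment ℝ r s).Nonempty := by
  set d1 := cross3 r s p with hd1
  set d2 := cross3 r s q with hd2
  set e1 := cross3 p q r with he1
  set e2 := cross3 p q s with he2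
  have hd : d1 - d2 ≠ 0 := by
    rcases mul_neg_iff.mp h1 with ⟨ha, hb⟩ | ⟨ha, hb⟩ <;> intro hc <;> nlinarith
  have he : e1 - e2 ≠ 0 := by
    rcases mul_neg_iff.mp h2 with ⟨ha, hb⟩ | ⟨ha, hb⟩ <;> intro hc <;> nlinarith
  set t := d1 / (d1 - d2) with htdef
  set w := e1 / (e1 - e2) with hwdef
  have ht0 : 0 ≤ t := by
    rw [htdef, div_nonneg_iff]
    rcases mul_neg_iff.mp h1 with ⟨ha, hb⟩ | ⟨ha, hb⟩
    · left; constructor <;> linarith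
    · right; constructor <;> linarith
  have ht1 : t ≤ 1 := by
    rw [htdef]
    rcases mul_neg_iff.mp h1 with ⟨ha, hb⟩ | ⟨ha, hb⟩
    · rw [div_le_one (by linarith)]; linarith
    · rw [show d1/(d1-d2) = (-d1)/(d2-d1) by
        rw [div_eq_div_iff (by linarith) (by linarith)]; ring]
      rw [div_le_one (by linarith)]; linarith
  have hw0 : 0 ≤ w := by
    rw [hwdef, div_nonneg_iff]
    rcases mul_neg_iff.mp h2 with ⟨ha, hb⟩ | ⟨ha, hb⟩
    · left; constructor <;> linarith
    · right; constructor <;> linarith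
  have hw1 : w ≤ 1 := by
    rw [hwdef]
    rcases mul_neg_iff.mp h2 with ⟨ha, hb⟩ | ⟨ha, hb⟩
    · rw [div_le_one (by linarith)]; linarith
    · rw [show e1/(e1-e2) = (-e1)/(e2-e1) by
        rw [div_eq_div_iff (by linarith) (by linarith)]; ring]
      rw [div_le_one (by linarith)]; linarith
  refine ⟨(1-t) • p + t • q, ⟨1-t, t, by linarith, ht0, by ring, rfl⟩, ?_⟩
  have hXY : (1-t) • p + t • q = (1-w) • r + w • s := by
    obtain ⟨p1, p2⟩ := p; obtain ⟨q1, q2⟩ := q; obtain ⟨r1, r2⟩ := r; obtain ⟨s1, s2⟩ := s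
    simp only [htdef, hwdef, hd1, hd2, he1, he2, cross3] at hd he ⊢
    apply Prod.ext
    · simp only [Prod.fst_add, Prod.smul_fst, smul_eq_mul]
      field_simp
      ring
    · simp only [Prod.snd_add, Prod.smul_snd, smul_eq_mul]
      field_simp
      ring
  rw [hXY]
  exact ⟨1-w, w, by linarith, hw0, by ring, rfl⟩

lemma res_spec {n : ℕ} (hn : 0 < n) (a c : ℕ) :
    (c + n - a % n) % n < n ∧ c ≡ a + (c + n - a % n) % n [MOD n] := by
  refine ⟨Nat.mod_lt _ hn, ?_⟩
  have ham : a % n < n := Nat.mod_lt _ hn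
  have h1 : a + (c + n - a % n) % n ≡ a + (c + n - a % n) [MOD n] :=
    Nat.ModEq.add_left a (Nat.mod_modEq _ n)
  have h2 : a + (c + n - a % n) ≡ a % n + (c + n - a % n) [MOD n] :=
    Nat.ModEq.add_right _ (Nat.mod_modEq a n).symm
  have h3 : a % n + (c + n - a % n) = c + n := by omega
  have h4 : c + n ≡ c [MOD n] := Nat.add_mod_right c n
  have h5 : a % n + (c + n - a % n) ≡ c [MOD n] := by rw [h3]; exact h4
  exact ((h1.trans h2).trans h5).symm

lemma res_exists {n : ℕ} (hn : 0 < n) (a c : ℕ) : ∃ v, v < n ∧ c ≡ a + v [MOD n] :=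
  ⟨_, (res_spec hn a c).1, (res_spec hn a c).2⟩

lemma modeq_eq {n s t : ℕ} (h : s ≡ t [MOD n]) (hs : s < n) (ht : t < n) : s = t := by
  have heq : s % n = t % n := h
  rwa [Nat.mod_eq_of_lt hs, Nat.mod_eq_of_lt ht] at heq

lemma modeq_cases {n s t : ℕ} (h : s ≡ t [MOD n]) (hs : s < 2*n) (ht : t < n) :
    s = t ∨ s = t + n := by
  rcases lt_or_ge s n with h1 | h1
  · exact Or.inl (modeq_eq h h1 ht)
  · right
    have heq : s % n = t % n := h
    rw [Nat.mod_eq_sub_mod h1, Nat.mod_eq_of_lt (by omega), Nat.mod_eq_of_lt ht] at heq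
    omega

lemma card_side_pos {n : ℕ} (hn : 0 < n) (x u : ℕ) (hu0 : 0 < u) (hun : u < n) :
    ((Finset.range n).filter (fun r => 0 < cross3 (pt n x) (pt n (x+u)) (pt n r))).card
      = u - 1 := by
  rw [show u - 1 = (Finset.Ico 1 u).card by rw [Nat.card_Ico]]
  apply Finset.card_nbij' (fun r => (r + n - x % n) % n) (fun v => (x + v) % n)
  · intro r hr
    simp only [Finset.mem_coe, Finset.mem_filter, Finset.mem_range] at hr
    obtain ⟨hrn, hpos⟩ := hr
    obtain ⟨hvn, hme⟩ := res_spec hn x r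
    set v := (r + n - x % n) % n with hv
    rw [pt_congr hme] at hpos
    simp only [Finset.mem_coe, Finset.mem_Ico]
    constructor
    · rcases Nat.eq_zero_or_pos v with h0 | h0
      · exfalso
        rw [h0, Nat.add_zero, cross3_self₃] at hpos
        exact lt_irrefl _ hpos
      · exact h0
    · by_contra hge
      push_neg at hge
      rcases eq_or_lt_of_le hge with heq | hlt
      · rw [show v = u from heq.symm, cross3_self₂] at hpos
        exact lt_irrefl _ hpos
      · exact absurd hpos (not_lt.mpr (le_of_lt (cross3_pt_neg hu0 hlt hvn)))
  · intro v hv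
    simp only [Finset.mem_coe, Finset.mem_Ico] at hv
    simp only [Finset.mem_coe, Finset.mem_filter, Finset.mem_range]
    refine ⟨Nat.mod_lt _ hn, ?_⟩
    rw [pt_congr (Nat.mod_modEq (x+v) n)]
    exact cross3_pt_pos hv.1 hv.2 hun
  · intro r hr
    simp only [Finset.mem_coe, Finset.mem_filter, Finset.mem_range] at hr
    have hme := (res_spec hn x r).2
    have : (x + (r + n - x % n) % n) % n = r % n := hme.symm
    rwa [Nat.mod_eq_of_lt hr.1] at this
  · intro v hv
    simp only [Finset.mem_coe, Finset.mem_Ico] at hv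
    have h1 := (res_spec hn x ((x+v) % n)).2
    have h2 : (x+v) % n ≡ x + v [MOD n] := Nat.mod_modEq _ n
    have h3 : x + ((x+v) % n + n - x % n) % n ≡ x + v [MOD n] := h1.symm.trans h2
    have h4 := Nat.ModEq.add_left_cancel' x h3
    exact modeq_eq h4 (res_spec hn x ((x+v) % n)).1 (by omega)

lemma card_side_neg {n : ℕ} (hn : 0 < n) (x u : ℕ) (hu0 : 0 < u) (hun : u < n) :
    ((Finset.range n).filter (fun r => cross3 (pt n x) (pt n (x+u)) (pt n r) < 0)).card
      = n - 1 - u := by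
  rw [show n - 1 - u = (Finset.Ico (u+1) n).card by rw [Nat.card_Ico]; omega]
  apply Finset.card_nbij' (fun r => (r + n - x % n) % n) (fun v => (x + v) % n)
  · intro r hr
    simp only [Finset.mem_coe, Finset.mem_filter, Finset.mem_range] at hr
    obtain ⟨hrn, hneg⟩ := hr
    obtain ⟨hvn, hme⟩ := res_spec hn x r
    set v := (r + n - x % n) % n with hv
    rw [pt_congr hme] at hneg
    simp only [Finset.mem_coe, Finset.mem_Ico]
    refine ⟨?_, hvn⟩
    by_contra hlt
    push_neg at hlt
    rcases Nat.eq_zero_or_pos v with h0 | h0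
    · rw [h0, Nat.add_zero, cross3_self₃] at hneg
      exact lt_irrefl _ hneg
    rcases eq_or_lt_of_le (Nat.lt_succ_iff.mp hlt) with heq | hlt2
    · rw [show v = u from heq, cross3_self₂] at hneg
      exact lt_irrefl _ hneg
    · exact absurd hneg (not_lt.mpr (le_of_lt (cross3_pt_pos h0 hlt2 hun)))
  · intro v hv
    simp only [Finset.mem_coe, Finset.mem_Ico] at hv
    simp only [Finset.mem_coe, Finset.mem_filter, Finset.mem_range]
    refine ⟨Nat.mod_lt _ hn, ?_⟩
    rw [pt_congr (Nat.mod_modEq (x+v) n)]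
    exact cross3_pt_neg hu0 (by omega) hv.2
  · intro r hr
    simp only [Finset.mem_coe, Finset.mem_filter, Finset.mem_range] at hr
    have hme := (res_spec hn x r).2
    have : (x + (r + n - x % n) % n) % n = r % n := hme.symm
    rwa [Nat.mod_eq_of_lt hr.1] at this
  · intro v hv
    simp only [Finset.mem_coe, Finset.mem_Ico] at hv
    have h1 := (res_spec hn x ((x+v) % n)).2
    have h2 : (x+v) % n ≡ x + v [MOD n] := Nat.mod_modEq _ n
    have h3 : x + ((x+v) % n + n - x % n) % n ≡ x + v [MOD n] := h1.symm.trans h2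
    have h4 := Nat.ModEq.add_left_cancel' x h3
    exact modeq_eq h4 (res_spec hn x ((x+v) % n)).1 (by omega)

lemma ngon_card {n : ℕ} (hn : 0 < n) : (ngon n).card = n := by
  rw [ngon, Finset.card_image_of_injOn, Finset.card_range]
  intro k hk l hl h
  simp only [Finset.mem_coe, Finset.mem_range] at hk hl
  exact pt_inj hn hk hl h

lemma filter_ngon_card {n : ℕ} (hn : 0 < n) (P : Pt → Prop) :
    ((ngon n).filter (fun p => P p)).card
      = ((Finset.range n).filter (fun r => P (pt n r))).card := by
  rw [ngon, Finset.filter_image]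
  apply Finset.card_image_of_injOn
  intro k hk l hl h
  simp only [Finset.coe_filter, Set.mem_setOf_eq, Finset.mem_range] at hk hl
  exact pt_inj hn hk.1 hl.1 h

lemma halving_mod {n : ℕ} (hn3 : 3 ≤ n) (he : Even n) {x y : ℕ} (h : Halving n x y) :
    y ≡ x + n/2 [MOD n] := by
  obtain ⟨m, hm⟩ := he
  have hm2 : 2 ≤ m := by omega
  have hn0 : 0 < n := by omega
  have hcard : (ngon n).card = n := ngon_card hn0
  obtain ⟨u, hun, hu⟩ := res_exists hn0 x y
  have hpty : pt n y = pt n (x+u) := pt_congr hu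
  have h1 : (n - 2)/2 ≤ ((ngon n).filter (fun r => 0 < cross3 (pt n x) (pt n y) r)).card := by
    have := h.1; rwa [hcard] at this
  have h2 : (n - 2)/2 ≤ ((ngon n).filter (fun r => cross3 (pt n x) (pt n y) r < 0)).card := by
    have := h.2; rwa [hcard] at this
  rcases Nat.eq_zero_or_pos u with rfl | hu0
  · exfalso
    have hxy : pt n y = pt n x := by simpa using hpty
    rw [hxy] at h1
    have hz : ((ngon n).filter (fun r => 0 < cross3 (pt n x) (pt n x) r)).card = 0 := by
      rw [Finset.card_eq_zero, Finset.filter_eq_empty_iff]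
      intro r _
      simp [cross3_self₁]
    omega
  have hc1 : ((ngon n).filter (fun r => 0 < cross3 (pt n x) (pt n y) r)).card = u - 1 := by
    simp only [hpty]
    rw [filter_ngon_card hn0]
    exact card_side_pos hn0 x u hu0 hun
  have hc2 : ((ngon n).filter (fun r => cross3 (pt n x) (pt n y) r < 0)).card = n - 1 - u := by
    simp only [hpty]
    rw [filter_ngon_card hn0]
    exact card_side_neg hn0 x u hu0 hun
  have hum : u = n/2 := by omega
  rw [← hum]
  exact hu

lemma cross_block {n m a c d vc vd : ℕ} (hn : n = 2*m) (hm : 2 ≤ m)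
    (hc : pt n c = pt n (a + vc)) (hd : pt n d = pt n (a + vd))
    (h1 : 1 ≤ vc) (h2 : vc ≤ m - 2) (h3 : m ≤ vd) (h4 : vd ≤ n - 1) :
    (segment ℝ (pt n a) (pt n (a + (m-1))) ∩ segment ℝ (pt n c) (pt n d)).Nonempty := by
  apply seg_cross
  · have hd2 : pt n d = pt n ((a+vc) + (vd - vc)) := by rw [hd]; congr 1; omega
    have ha2 : pt n a = pt n ((a+vc) + (n - vc)) := by
      have h5 : (a+vc) + (n - vc) = a + n := by omega
      rw [h5]
      exact (pt_congr (Nat.add_mod_right a n)).symm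
    have hb2 : pt n (a + (m-1)) = pt n ((a+vc) + (m-1-vc)) := by congr 1; omega
    rw [hc, hd2, ha2, hb2]
    apply mul_neg_of_neg_of_pos
    · exact cross3_pt_neg (by omega) (by omega) (by omega)
    · exact cross3_pt_pos (by omega) (by omega) (by omega)
  · rw [hc, hd]
    apply mul_neg_of_pos_of_neg
    · exact cross3_pt_pos (by omega) (by omega) (by omega)
    · exact cross3_pt_neg (by omega) (by omega) (by omega)

/-- For even `n`, every almost-halving edge intersects every halving pair. -/
theorem almost_halving_intersects_pair (n : ℕ) (hn : 3 ≤ n) (heven : Even n)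
    (a b i j k : ℕ) (hab : pt n a ≠ pt n b)
    (hah : Halving n a (b + 1)) (hp : HalvingPair n i j k) :
    EInter n a b i j ∨ EInter n a b (j + 1) k := by
  have hn0 : 0 < n := by omega
  obtain ⟨m, hm⟩ := heven
  have hm2 : 2 ≤ m := by omega
  obtain ⟨hij_ne, hj1k_ne, hdisj, hwit⟩ := hp
  have hmod_b : (b+1) ≡ a + m [MOD n] := by
    have := halving_mod hn ⟨m, hm⟩ hah
    rwa [show n/2 = m by omega] at this
  have hb : b ≡ a + (m-1) [MOD n] := by
    have h' : b + 1 ≡ (a + (m-1)) + 1 [MOD n] := by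
      rw [show a + (m-1) + 1 = a + m by omega]; exact hmod_b
    exact Nat.ModEq.add_right_cancel' 1 h'
  have hbp : pt n b = pt n (a + (m-1)) := pt_congr hb
  obtain ⟨vi, hvin, hvi⟩ := res_exists hn0 a i
  obtain ⟨vj, hvjn, hvj⟩ := res_exists hn0 a j
  obtain ⟨vj1, hvj1n, hvj1⟩ := res_exists hn0 a (j+1)
  obtain ⟨vk, hvkn, hvk⟩ := res_exists hn0 a k
  have pi' : pt n i = pt n (a + vi) := pt_congr hvi
  have pj' : pt n j = pt n (a + vj) := pt_congr hvj
  have pj1' : pt n (j+1) = pt n (a + vj1) := pt_congr hvj1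
  have pk' : pt n k = pt n (a + vk) := pt_congr hvk
  by_contra hcon
  rw [not_or] at hcon
  obtain ⟨hE1, hE2⟩ := hcon
  -- endpoint exclusions
  have end1 : ∀ v : ℕ, v = 0 ∨ v = m - 1 →
      ¬ (pt n i = pt n (a + v) ∨ pt n j = pt n (a + v)) := by
    rintro v hv hor
    apply hE1
    have hpav : pt n (a + v) ∈ segment ℝ (pt n a) (pt n b) := by
      rcases hv with rfl | rfl
      · rw [Nat.add_zero]; exact left_mem_segment ℝ _ _
      · rw [← hbp]; exact right_mem_segment ℝ _ _
    rcases hor with hq | hq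
    · exact ⟨pt n (a+v), hpav, by rw [← hq]; exact left_mem_segment ℝ _ _⟩
    · exact ⟨pt n (a+v), hpav, by rw [← hq]; exact right_mem_segment ℝ _ _⟩
  have end2 : ∀ v : ℕ, v = 0 ∨ v = m - 1 →
      ¬ (pt n (j+1) = pt n (a + v) ∨ pt n k = pt n (a + v)) := by
    rintro v hv hor
    apply hE2
    have hpav : pt n (a + v) ∈ segment ℝ (pt n a) (pt n b) := by
      rcases hv with rfl | rfl
      · rw [Nat.add_zero]; exact left_mem_segment ℝ _ _
      · rw [← hbp]; exact right_mem_segment ℝ _ _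
    rcases hor with hq | hq
    · exact ⟨pt n (a+v), hpav, by rw [← hq]; exact left_mem_segment ℝ _ _⟩
    · exact ⟨pt n (a+v), hpav, by rw [← hq]; exact right_mem_segment ℝ _ _⟩
  have hvi0 : vi ≠ 0 := fun h => end1 0 (Or.inl rfl) (Or.inl (h ▸ pi'))
  have hvim : vi ≠ m-1 := fun h => end1 (m-1) (Or.inr rfl) (Or.inl (h ▸ pi'))
  have hvj0 : vj ≠ 0 := fun h => end1 0 (Or.inl rfl) (Or.inr (h ▸ pj'))
  have hvjm : vj ≠ m-1 := fun h => end1 (m-1) (Or.inr rfl) (Or.inr (h ▸ pj'))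
  have hvj10 : vj1 ≠ 0 := fun h => end2 0 (Or.inl rfl) (Or.inl (h ▸ pj1'))
  have hvj1m : vj1 ≠ m-1 := fun h => end2 (m-1) (Or.inr rfl) (Or.inl (h ▸ pj1'))
  have hvk0 : vk ≠ 0 := fun h => end2 0 (Or.inl rfl) (Or.inr (h ▸ pk'))
  have hvkm : vk ≠ m-1 := fun h => end2 (m-1) (Or.inr rfl) (Or.inr (h ▸ pk'))
  -- block dichotomy
  have hd1 : (1 ≤ vi ∧ vi ≤ m-2 ∧ 1 ≤ vj ∧ vj ≤ m-2) ∨ (m ≤ vi ∧ m ≤ vj) := by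
    have c1 : ¬(1 ≤ vi ∧ vi ≤ m-2 ∧ m ≤ vj ∧ vj ≤ n-1) := by
      rintro ⟨u1, u2, u3, u4⟩
      apply hE1
      have hcb := cross_block (show n = 2*m by omega) hm2 pi' pj' u1 u2 u3 u4
      show (segment ℝ (pt n a) (pt n b) ∩ segment ℝ (pt n i) (pt n j)).Nonempty
      rwa [hbp]
    have c2 : ¬(1 ≤ vj ∧ vj ≤ m-2 ∧ m ≤ vi ∧ vi ≤ n-1) := by
      rintro ⟨u1, u2, u3, u4⟩
      apply hE1
      have hcb := cross_block (show n = 2*m by omega) hm2 pj' pi' u1 u2 u3 u4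
      show (segment ℝ (pt n a) (pt n b) ∩ segment ℝ (pt n i) (pt n j)).Nonempty
      rw [hbp, segment_symm ℝ (pt n i) (pt n j)]
      exact hcb
    omega
  have hd2 : (1 ≤ vj1 ∧ vj1 ≤ m-2 ∧ 1 ≤ vk ∧ vk ≤ m-2) ∨ (m ≤ vj1 ∧ m ≤ vk) := by
    have c1 : ¬(1 ≤ vj1 ∧ vj1 ≤ m-2 ∧ m ≤ vk ∧ vk ≤ n-1) := by
      rintro ⟨u1, u2, u3, u4⟩
      apply hE2
      have hcb := cross_block (show n = 2*m by omega) hm2 pj1' pk' u1 u2 u3 u4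
      show (segment ℝ (pt n a) (pt n b) ∩ segment ℝ (pt n (j+1)) (pt n k)).Nonempty
      rwa [hbp]
    have c2 : ¬(1 ≤ vk ∧ vk ≤ m-2 ∧ m ≤ vj1 ∧ vj1 ≤ n-1) := by
      rintro ⟨u1, u2, u3, u4⟩
      apply hE2
      have hcb := cross_block (show n = 2*m by omega) hm2 pk' pj1' u1 u2 u3 u4
      show (segment ℝ (pt n a) (pt n b) ∩ segment ℝ (pt n (j+1)) (pt n k)).Nonempty
      rw [hbp, segment_symm ℝ (pt n (j+1)) (pt n k)]
      exact hcb
    omega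
  -- consecutive step
  have hstep : vj + 1 ≡ vj1 [MOD n] := by
    have h1 : j + 1 ≡ (a + vj) + 1 [MOD n] := hvj.add_right 1
    have h2 := h1.symm.trans hvj1
    rw [show a + vj + 1 = a + (vj + 1) by omega] at h2
    exact Nat.ModEq.add_left_cancel' a h2
  have hvj1eq : vj1 = vj + 1 := by
    rcases modeq_cases hstep (by omega) hvj1n with h | h <;> omega
  -- witness
  rcases hwit with hw | hw | hw
  · have hwm : (j+1) ≡ i + m [MOD n] := by
      have := halving_mod hn ⟨m, hm⟩ hw
      rwa [show n/2 = m by omega] at this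
    have hfin : vi + m ≡ vj1 [MOD n] := by
      have h1 : i + m ≡ (a + vi) + m [MOD n] := hvi.add_right m
      have h2 := h1.symm.trans (hwm.symm.trans hvj1)
      rw [show a + vi + m = a + (vi + m) by omega] at h2
      exact Nat.ModEq.add_left_cancel' a h2
    rcases modeq_cases hfin (by omega) hvj1n with h | h <;> omega
  · have hwm : k ≡ i + m [MOD n] := by
      have := halving_mod hn ⟨m, hm⟩ hw
      rwa [show n/2 = m by omega] at this
    have hfin : vi + m ≡ vk [MOD n] := by
      have h1 : i + m ≡ (a + vi) + m [MOD n] := hvi.add_right m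
      have h2 := h1.symm.trans (hwm.symm.trans hvk)
      rw [show a + vi + m = a + (vi + m) by omega] at h2
      exact Nat.ModEq.add_left_cancel' a h2
    rcases modeq_cases hfin (by omega) hvkn with h | h <;> omega
  · have hwm : k ≡ j + m [MOD n] := by
      have := halving_mod hn ⟨m, hm⟩ hw
      rwa [show n/2 = m by omega] at this
    have hfin : vj + m ≡ vk [MOD n] := by
      have h1 : j + m ≡ (a + vj) + m [MOD n] := hvj.add_right m
      have h2 := h1.symm.trans (hwm.symm.trans hvk)
      rw [show a + vj + m = a + (vj + m) by omega] at h2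
      exact Nat.ModEq.add_left_cancel' a h2
    rcases modeq_cases hfin (by omega) hvkn with h | h <;> omega
end

section
/- The pseudoachromatic index of the complete convex geometric graph on 4 vertices equals 5, and its achromatic index equals 4. -/
open scoped Classical

set_option maxHeartbeats 2000000

-- ===== auxiliary development =====
section Aux

def det3 (a b c : Pt) : ℝ := (b.1-a.1)*(c.2-a.2) - (b.2-a.2)*(c.1-a.1)

lemma seg2_mk (p q : Pt) : seg2 s(p,q) = segment ℝ p q := rfl

lemma det3_cyclic (a b c : Pt) : det3 a b c = det3 b c a := by simp [det3]; ring
lemma det3_swap (a b c : Pt) : det3 a b c = - det3 a c b := by simp [det3]; ring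
lemma det3_identity (a b c d : Pt) :
    det3 a b c - det3 a b d + det3 a c d - det3 b c d = 0 := by simp [det3]; ring

lemma det3_affine (a b : Pt) {t : ℝ} (p q : Pt) :
    det3 a b ((1-t) • p + t • q) = (1-t) * det3 a b p + t * det3 a b q := by
  simp [det3, Prod.smul_fst, Prod.smul_snd, Prod.fst_add, Prod.snd_add]; ring

lemma det3_of_mem_segment {a b x : Pt} (hx : x ∈ segment ℝ a b) {p q : Pt} :
    ∃ t : ℝ, 0 ≤ t ∧ t ≤ 1 ∧ det3 p q x = (1-t) * det3 p q a + t * det3 p q b := by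
  rw [segment_eq_image] at hx
  obtain ⟨t, ht, rfl⟩ := hx
  exact ⟨t, ht.1, ht.2, det3_affine p q a b⟩

lemma det3_self_left (a b : Pt) : det3 a b a = 0 := by simp [det3]
lemma det3_self_right (a b : Pt) : det3 a b b = 0 := by simp [det3]; ring

lemma not_sinter_of_same_side {a b c d : Pt} (h : 0 < det3 a b c * det3 a b d) :
    ¬ SInter s(a,b) s(c,d) := by
  rintro ⟨x, hx1, hx2⟩
  rw [seg2_mk] at hx1 hx2
  obtain ⟨t, ht0, ht1, hdet⟩ := det3_of_mem_segment hx2 (p := a) (q := b)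
  obtain ⟨s, hs0, hs1, hdet'⟩ := det3_of_mem_segment hx1 (p := a) (q := b)
  rw [det3_self_left, det3_self_right] at hdet'
  have hx0 : det3 a b x = 0 := by rw [hdet']; ring
  rw [hx0] at hdet
  rcases mul_pos_iff.mp h with ⟨h1, h2⟩ | ⟨h1, h2⟩
  · nlinarith [mul_nonneg (by linarith : (0:ℝ) ≤ 1 - t) h1.le, mul_nonneg ht0 h2.le]
  · nlinarith [mul_nonpos_of_nonneg_of_nonpos (by linarith : (0:ℝ) ≤ 1 - t) h1.le,
      mul_nonpos_of_nonneg_of_nonpos ht0 h2.le]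

lemma opp_side_of_cross {a b c d x : Pt} (hx1 : x ∈ segment ℝ a c) (hx2 : x ∈ segment ℝ b d)
    (ha : det3 b d a ≠ 0) (hc : det3 b d c ≠ 0) : det3 b d a * det3 b d c < 0 := by
  obtain ⟨t, ht0, ht1, hdet⟩ := det3_of_mem_segment hx1 (p := b) (q := d)
  obtain ⟨s, hs0, hs1, hdet'⟩ := det3_of_mem_segment hx2 (p := b) (q := d)
  rw [det3_self_left, det3_self_right] at hdet'
  have hx0 : det3 b d x = 0 := by rw [hdet']; ring
  rw [hx0] at hdet
  rcases ha.lt_or_gt with h | h <;> rcases hc.lt_or_gt with h' | h'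
  · nlinarith [mul_nonpos_of_nonneg_of_nonpos (by linarith : (0:ℝ) ≤ 1 - t) h.le,
      mul_nonpos_of_nonneg_of_nonpos ht0 h'.le]
  · nlinarith
  · nlinarith
  · nlinarith [mul_nonneg (by linarith : (0:ℝ) ≤ 1 - t) h.le, mul_nonneg ht0 h'.le]

lemma collinear_of_det3 {a b c : Pt} (hab : a ≠ b) (h : det3 a b c = 0) :
    Collinear ℝ ({a, b, c} : Set Pt) := by
  rw [collinear_iff_of_mem (Set.mem_insert a _)]
  refine ⟨b - a, ?_⟩
  intro p hp
  rcases hp with rfl | rfl | hp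
  · exact ⟨0, by simp⟩
  · exact ⟨1, by simp⟩
  rw [Set.mem_singleton_iff] at hp
  subst hp
  have hd : (b.1-a.1)*(p.2-a.2) - (b.2-a.2)*(p.1-a.1) = 0 := h
  by_cases h1 : b.1 - a.1 = 0
  · have h2 : b.2 - a.2 ≠ 0 := by
      intro h2; exact hab (by ext <;> linarith)
    refine ⟨(p.2 - a.2)/(b.2-a.2), ?_⟩
    have hp1 : p.1 = a.1 := by
      rw [h1] at hd
      have : (b.2-a.2)*(p.1-a.1) = 0 := by linarith
      rcases mul_eq_zero.mp this with h' | h'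
      · exact absurd h' h2
      · linarith
    ext
    · show p.1 = ((p.2 - a.2)/(b.2-a.2)) * (b.1 - a.1) + a.1
      rw [h1, mul_zero]; linarith
    · show p.2 = ((p.2 - a.2)/(b.2-a.2)) * (b.2 - a.2) + a.2
      field_simp
      ring
  · refine ⟨(p.1 - a.1)/(b.1-a.1), ?_⟩
    ext
    · show p.1 = ((p.1 - a.1)/(b.1-a.1)) * (b.1 - a.1) + a.1
      field_simp
      ring
    · show p.2 = ((p.1 - a.1)/(b.1-a.1)) * (b.2 - a.2) + a.2
      field_simp
      linear_combination hd

lemma small_side (S : Finset Pt) (hconv : ConvexPos S) (T U : Set Pt) (x : Pt)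
    (hT : T.Finite) (hun : T ∪ U = ↑S) (hdis : Disjoint T U)
    (hx1 : x ∈ convexHull ℝ T) (hx2 : x ∈ convexHull ℝ U) (hc : T.ncard ≤ 1) : False := by
  rcases Nat.le_one_iff_eq_zero_or_eq_one.mp hc with h | h
  · rw [Set.ncard_eq_zero hT] at h
    subst h
    simp at hx1
  · rw [Set.ncard_eq_one] at h
    obtain ⟨p, rfl⟩ := h
    rw [convexHull_singleton, Set.mem_singleton_iff] at hx1
    subst hx1
    have hpS : x ∈ S := by
      have hx : x ∈ ({x} ∪ U : Set Pt) := Set.mem_union_left _ rfl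
      rw [hun] at hx
      exact_mod_cast hx
    have hU : U ⊆ (↑S : Set Pt) \ {x} := by
      intro u hu
      refine ⟨?_, ?_⟩
      · rw [← hun]; exact Set.mem_union_right _ hu
      · intro h'
        rw [Set.mem_singleton_iff] at h'
        subst h'
        exact (Set.disjoint_left.mp hdis rfl) hu
    exact hconv x hpS (convexHull_mono hU hx2)

lemma radon_label (S : Finset Pt) (hn : S.card = 4) (hconv : ConvexPos S) :
    ∃ a b c d : Pt, (S : Set Pt) = {a, b, c, d} ∧
      a ≠ b ∧ a ≠ c ∧ a ≠ d ∧ b ≠ c ∧ b ≠ d ∧ c ≠ d ∧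
      (segment ℝ a c ∩ segment ℝ b d).Nonempty := by
  classical
  set f : {x : Pt // x ∈ S} → Pt := Subtype.val with hf
  have hinj : Function.Injective f := Subtype.val_injective
  have hcard : Fintype.card {x : Pt // x ∈ S} = 4 := by rw [Fintype.card_coe, hn]
  have hnai : ¬ AffineIndependent ℝ f := by
    intro h
    have h1 := h.card_le_finrank_succ
    have h2 : Module.finrank ℝ (vectorSpan ℝ (Set.range f)) ≤ Module.finrank ℝ Pt :=
      Submodule.finrank_le _
    have h3 : Module.finrank ℝ Pt = 2 := by simp [Module.finrank_prod]
    omega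
  obtain ⟨I, x, hx1, hx2⟩ := Convex.radon_partition hnai
  have hfinT : (f '' I).Finite := (Set.toFinite I).image f
  have hfinU : (f '' Iᶜ).Finite := (Set.toFinite Iᶜ).image f
  have hun : f '' I ∪ f '' Iᶜ = ↑S := by
    rw [← Set.image_union, Set.union_compl_self, Set.image_univ]
    ext y; simp [hf]
  have hdis : Disjoint (f '' I) (f '' Iᶜ) := by
    rw [Set.disjoint_iff_inter_eq_empty, ← Set.image_inter hinj, Set.inter_compl_self,
      Set.image_empty]
  have hsum : (f '' I).ncard + (f '' Iᶜ).ncard = 4 := by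
    rw [← Set.ncard_union_eq hdis hfinT hfinU, hun, Set.ncard_coe_finset, hn]
  have h2T : 2 ≤ (f '' I).ncard := by
    by_contra h
    exact small_side S hconv _ _ x hfinT hun hdis hx1 hx2 (by omega)
  have h2U : 2 ≤ (f '' Iᶜ).ncard := by
    by_contra h
    exact small_side S hconv _ _ x hfinU (by rw [Set.union_comm] at hun; exact hun)
      hdis.symm hx2 hx1 (by omega)
  have hTc : (f '' I).ncard = 2 := by omega
  have hUc : (f '' Iᶜ).ncard = 2 := by omega
  obtain ⟨a, c, hac, hT⟩ := (Set.ncard_eq_two).mp hTc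
  obtain ⟨b, d, hbd, hU⟩ := (Set.ncard_eq_two).mp hUc
  rw [hT] at hx1 hdis hun
  rw [hU] at hx2 hdis hun
  have hna : a ∉ ({b, d} : Set Pt) := Set.disjoint_left.mp hdis (by simp)
  have hnc : c ∉ ({b, d} : Set Pt) := Set.disjoint_left.mp hdis (by simp)
  have hab : a ≠ b := fun h => hna (by simp [h])
  have had : a ≠ d := fun h => hna (by simp [h])
  have hcb : c ≠ b := fun h => hnc (by simp [h])
  have hcd : c ≠ d := fun h => hnc (by simp [h])
  refine ⟨a, b, c, d, ?_, hab, hac, had, fun h => hcb h.symm, hbd, hcd, ⟨x, ?_, ?_⟩⟩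
  · rw [← hun]; ext y; simp; tauto
  · rwa [convexHull_pair] at hx1
  · rwa [convexHull_pair] at hx2

lemma sinter_ll (p q r : Pt) : SInter s(p,q) s(p,r) :=
  ⟨p, by rw [seg2_mk]; exact left_mem_segment ℝ p q, by rw [seg2_mk]; exact left_mem_segment ℝ p r⟩
lemma sinter_lr (p q r : Pt) : SInter s(p,q) s(r,p) :=
  ⟨p, by rw [seg2_mk]; exact left_mem_segment ℝ p q, by rw [seg2_mk]; exact right_mem_segment ℝ r p⟩
lemma sinter_rl (p q r : Pt) : SInter s(p,q) s(q,r) :=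
  ⟨q, by rw [seg2_mk]; exact right_mem_segment ℝ p q, by rw [seg2_mk]; exact left_mem_segment ℝ q r⟩
lemma sinter_rr (p q r : Pt) : SInter s(p,q) s(r,q) :=
  ⟨q, by rw [seg2_mk]; exact right_mem_segment ℝ p q, by rw [seg2_mk]; exact right_mem_segment ℝ r q⟩
lemma sinter_comm {e f : Sym2 Pt} (h : SInter e f) : SInter f e := by
  obtain ⟨x, h1, h2⟩ := h; exact ⟨x, h2, h1⟩

lemma sign_products {D1 D2 D3 D4 : ℝ} (h13 : 0 < D1 * D3) (h24 : 0 < D2 * D4)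
    (hid : D1 - D2 + D3 - D4 = 0) : 0 < D1 * D2 ∧ 0 < D1 * D4 := by
  rcases mul_pos_iff.mp h13 with ⟨ha, hb⟩ | ⟨ha, hb⟩ <;>
    rcases mul_pos_iff.mp h24 with ⟨hc, hd⟩ | ⟨hc, hd⟩ <;>
    constructor <;> nlinarith

noncomputable def E6 (a b c d : Pt) : Finset (Sym2 Pt) :=
  {s(a,b), s(a,c), s(a,d), s(b,c), s(b,d), s(c,d)}

set_option maxHeartbeats 2000000 in
lemma edgeSet_eq {S : Finset Pt} {a b c d : Pt} (hS : (S : Set Pt) = {a, b, c, d})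
    (hab : a ≠ b) (hac : a ≠ c) (had : a ≠ d) (hbc : b ≠ c) (hbd : b ≠ d) (hcd : c ≠ d) :
    edgeSet S = E6 a b c d := by
  have hmem : ∀ y : Pt, y ∈ S ↔ (y = a ∨ y = b ∨ y = c ∨ y = d) := by
    intro y
    rw [← Finset.mem_coe, hS]
    simp
  ext e
  refine Sym2.ind (fun x y => ?_) e
  simp only [edgeSet, E6, Finset.mem_filter, Finset.mem_sym2_iff, Sym2.mem_iff,
    Sym2.mk_isDiag_iff, Finset.mem_insert, Finset.mem_singleton, Sym2.eq_iff]
  constructor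
  · rintro ⟨hm, hne⟩
    have hx := (hmem x).mp (hm x (Or.inl rfl))
    have hy := (hmem y).mp (hm y (Or.inr rfl))
    rcases hx with rfl|rfl|rfl|rfl <;> rcases hy with rfl|rfl|rfl|rfl <;> tauto
  · intro h
    constructor
    · intro z hz
      rw [hmem z]
      rcases hz with rfl | rfl <;> tauto
    · intro hxy
      rcases h with (⟨h1,h2⟩|⟨h1,h2⟩)|(⟨h1,h2⟩|⟨h1,h2⟩)|(⟨h1,h2⟩|⟨h1,h2⟩)|(⟨h1,h2⟩|⟨h1,h2⟩)|(⟨h1,h2⟩|⟨h1,h2⟩)|(⟨h1,h2⟩|⟨h1,h2⟩) <;>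
        rw [h1, h2] at hxy <;>
        first
          | exact hab hxy | exact hab hxy.symm | exact hac hxy | exact hac hxy.symm
          | exact had hxy | exact had hxy.symm | exact hbc hxy | exact hbc hxy.symm
          | exact hbd hxy | exact hbd hxy.symm | exact hcd hxy | exact hcd hxy.symm

end Aux
section Aux2

lemma card_four_le (w x y z : ℕ) : ({w, x, y, z} : Finset ℕ).card ≤ 4 := by
  have h1 := Finset.card_insert_le w ({x, y, z} : Finset ℕ)
  have h2 := Finset.card_insert_le x ({y, z} : Finset ℕ)
  have h3 := Finset.card_insert_le y ({z} : Finset ℕ)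
  simp only [Finset.card_singleton] at *
  omega

variable {a b c d : Pt}

lemma mem_ab : s(a,b) ∈ E6 a b c d := by simp [E6]
lemma mem_ac : s(a,c) ∈ E6 a b c d := by simp [E6]
lemma mem_ad : s(a,d) ∈ E6 a b c d := by simp [E6]
lemma mem_bc : s(b,c) ∈ E6 a b c d := by simp [E6]
lemma mem_bd : s(b,d) ∈ E6 a b c d := by simp [E6]
lemma mem_cd : s(c,d) ∈ E6 a b c d := by simp [E6]

lemma card_E6 (hab : a ≠ b) (hac : a ≠ c) (had : a ≠ d) (hbc : b ≠ c) (hbd : b ≠ d)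
    (hcd : c ≠ d) : (E6 a b c d).card = 6 := by
  rw [E6]
  rw [Finset.card_insert_of_notMem (by
    simp [Sym2.eq_iff, hab, hac, had, hbc, hbd, hcd, hab.symm, hac.symm, had.symm,
      hbc.symm, hbd.symm, hcd.symm])]
  rw [Finset.card_insert_of_notMem (by
    simp [Sym2.eq_iff, hab, hac, had, hbc, hbd, hcd, hab.symm, hac.symm, had.symm,
      hbc.symm, hbd.symm, hcd.symm])]
  rw [Finset.card_insert_of_notMem (by
    simp [Sym2.eq_iff, hab, hac, had, hbc, hbd, hcd, hab.symm, hac.symm, had.symm,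
      hbc.symm, hbd.symm, hcd.symm])]
  rw [Finset.card_insert_of_notMem (by
    simp [Sym2.eq_iff, hab, hac, had, hbc, hbd, hcd, hab.symm, hac.symm, had.symm,
      hbc.symm, hbd.symm, hcd.symm])]
  rw [Finset.card_insert_of_notMem (by
    simp [Sym2.eq_iff, hab, hac, had, hbc, hbd, hcd, hab.symm, hac.symm, had.symm,
      hbc.symm, hbd.symm, hcd.symm])]
  simp

lemma E6_mem_cases {e : Sym2 Pt} (he : e ∈ E6 a b c d) :
    e = s(a,b) ∨ e = s(a,c) ∨ e = s(a,d) ∨ e = s(b,c) ∨ e = s(b,d) ∨ e = s(c,d) := by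
  simpa [E6] using he

lemma psi_upper (hab : a ≠ b) (hac : a ≠ c) (had : a ≠ d) (hbc : b ≠ c) (hbd : b ≠ d)
    (hcd : c ≠ d) (hnd1 : ¬ SInter s(a,b) s(c,d)) (c0 : Sym2 Pt → ℕ)
    (hcomp : CompleteOn (E6 a b c d) c0) : ((E6 a b c d).image c0).card ≤ 5 := by
  by_contra h
  push_neg at h
  have hle : ((E6 a b c d).image c0).card ≤ (E6 a b c d).card := Finset.card_image_le
  have hc6 : (E6 a b c d).card = 6 := card_E6 hab hac had hbc hbd hcd
  have hEq : ((E6 a b c d).image c0).card = (E6 a b c d).card := by omega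
  have hinj := Finset.card_image_iff.mp hEq
  have hnee : s(a,b) ≠ s(c,d) := by
    simp [Sym2.eq_iff, hac, had, hbc, hbd]
  have hij : c0 s(a,b) ≠ c0 s(c,d) := fun h' =>
    hnee (hinj (Finset.mem_coe.mpr mem_ab) (Finset.mem_coe.mpr mem_cd) h')
  obtain ⟨e, he, f, hf, hei, hfj, hint⟩ := hcomp _ (Finset.mem_image_of_mem _ mem_ab) _
    (Finset.mem_image_of_mem _ mem_cd) hij
  have he' : e = s(a,b) := hinj (Finset.mem_coe.mpr he) (Finset.mem_coe.mpr mem_ab) hei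
  have hf' : f = s(c,d) := hinj (Finset.mem_coe.mpr hf) (Finset.mem_coe.mpr mem_cd) hfj
  subst he' hf'
  exact hnd1 hint

lemma alpha_case (a b c d : Pt) (c0 : Sym2 Pt → ℕ) (E : Finset (Sym2 Pt))
    (hab : a ≠ b) (hac : a ≠ c) (had : a ≠ d) (hbc : b ≠ c) (hbd : b ≠ d) (hcd : c ≠ d)
    (hEmem : ∀ e ∈ E, e = s(a,b) ∨ e = s(a,c) ∨ e = s(a,d) ∨ e = s(b,c) ∨ e = s(b,d) ∨
      e = s(c,d))
    (habE : s(a,b) ∈ E) (hacE : s(a,c) ∈ E) (hadE : s(a,d) ∈ E)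
    (hbcE : s(b,c) ∈ E) (hbdE : s(b,d) ∈ E) (hcdE : s(c,d) ∈ E)
    (hnd2 : ¬ SInter s(b,c) s(a,d))
    (hprop : ProperOn E c0) (hcomp : CompleteOn E c0)
    (hcard : 5 ≤ (E.image c0).card)
    (heq : c0 s(a,b) = c0 s(c,d)) : False := by
  have hij : c0 s(b,c) ≠ c0 s(a,d) := by
    intro hbcad
    have hsub : E.image c0 ⊆ {c0 s(a,b), c0 s(a,c), c0 s(a,d), c0 s(b,d)} := by
      intro x hx'
      obtain ⟨e, he, rfl⟩ := Finset.mem_image.mp hx'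
      rcases hEmem e he with rfl|rfl|rfl|rfl|rfl|rfl
      · simp
      · simp
      · simp
      · rw [hbcad]; simp
      · simp
      · rw [← heq]; simp
    have := (Finset.card_le_card hsub).trans (card_four_le _ _ _ _)
    omega
  obtain ⟨e, he, f, hf, hei, hfj, hint⟩ := hcomp _ (Finset.mem_image_of_mem _ hbcE) _
    (Finset.mem_image_of_mem _ hadE) hij
  have he' : e = s(b,c) := by
    rcases hEmem e he with rfl|rfl|rfl|rfl|rfl|rfl
    · exact absurd (sinter_rl a b c) (hprop _ habE _ hbcE (by
        simp [Sym2.eq_iff, hab, hac, hbc, hab.symm, hac.symm, hbc.symm]) hei)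
    · exact absurd (sinter_rr a c b) (hprop _ hacE _ hbcE (by
        simp [Sym2.eq_iff, hab, hac, hbc, hab.symm, hac.symm, hbc.symm]) hei)
    · exact absurd hei.symm hij
    · rfl
    · exact absurd (sinter_ll b d c) (hprop _ hbdE _ hbcE (by
        simp [Sym2.eq_iff, hbc, hbd, hcd, hbc.symm, hbd.symm, hcd.symm]) hei)
    · exact absurd (sinter_lr c d b) (hprop _ hcdE _ hbcE (by
        simp [Sym2.eq_iff, hbc, hbd, hcd, hbc.symm, hbd.symm, hcd.symm]) hei)
  have hf' : f = s(a,d) := by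
    rcases hEmem f hf with rfl|rfl|rfl|rfl|rfl|rfl
    · exact absurd (sinter_ll a b d) (hprop _ habE _ hadE (by
        simp [Sym2.eq_iff, hab, had, hbd, hab.symm, had.symm, hbd.symm]) hfj)
    · exact absurd (sinter_ll a c d) (hprop _ hacE _ hadE (by
        simp [Sym2.eq_iff, hac, had, hcd, hac.symm, had.symm, hcd.symm]) hfj)
    · rfl
    · exact absurd hfj hij
    · exact absurd (sinter_rr b d a) (hprop _ hbdE _ hadE (by
        simp [Sym2.eq_iff, hab, had, hbd, hab.symm, had.symm, hbd.symm]) hfj)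
    · exact absurd (sinter_rr c d a) (hprop _ hcdE _ hadE (by
        simp [Sym2.eq_iff, hac, had, hcd, hac.symm, had.symm, hcd.symm]) hfj)
  subst he' hf'
  exact hnd2 hint

lemma alpha_upper (hab : a ≠ b) (hac : a ≠ c) (had : a ≠ d) (hbc : b ≠ c) (hbd : b ≠ d)
    (hcd : c ≠ d) (hx : SInter s(a,c) s(b,d)) (hnd1 : ¬ SInter s(a,b) s(c,d))
    (hnd2 : ¬ SInter s(b,c) s(a,d)) (c0 : Sym2 Pt → ℕ)
    (hprop : ProperOn (E6 a b c d) c0) (hcomp : CompleteOn (E6 a b c d) c0) :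
    ((E6 a b c d).image c0).card ≤ 4 := by
  by_contra h
  push_neg at h
  have h5 : 5 ≤ ((E6 a b c d).image c0).card := h
  have hle : ((E6 a b c d).image c0).card ≤ 5 := psi_upper hab hac had hbc hbd hcd hnd1 c0 hcomp
  have hc6 : (E6 a b c d).card = 6 := card_E6 hab hac had hbc hbd hcd
  have hlt : ((E6 a b c d).image c0).card < (E6 a b c d).card := by omega
  obtain ⟨e, he, f, hf, hne, hcc⟩ := Finset.exists_ne_map_eq_of_card_lt_of_maps_to hlt
    (fun e he => Finset.mem_image_of_mem c0 he)
  have hns : ¬ SInter e f := hprop e he f hf hne hcc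
  have A1 : c0 s(a,b) = c0 s(c,d) → False :=
    alpha_case a b c d c0 _ hab hac had hbc hbd hcd (fun e he => E6_mem_cases he)
      mem_ab mem_ac mem_ad mem_bc mem_bd mem_cd hnd2 hprop hcomp h5
  have hbaE : s(b,a) ∈ E6 a b c d := by rw [Sym2.eq_swap]; exact mem_ab
  have hcaE : s(c,a) ∈ E6 a b c d := by rw [Sym2.eq_swap]; exact mem_ac
  have hdaE : s(d,a) ∈ E6 a b c d := by rw [Sym2.eq_swap]; exact mem_ad
  have A2 : c0 s(b,c) = c0 s(a,d) → False := by
    intro hq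
    refine alpha_case b c d a c0 (E6 a b c d) hbc hbd (fun h' => hab h'.symm) hcd
      (fun h' => hac h'.symm) (fun h' => had h'.symm) ?_ mem_bc mem_bd hbaE mem_cd hcaE hdaE
      ?_ hprop hcomp h5 ?_
    · intro e he
      rcases E6_mem_cases he with rfl|rfl|rfl|rfl|rfl|rfl <;> simp [Sym2.eq_iff]
    · intro h'
      apply hnd1
      have h'' := sinter_comm h'
      rw [show s(b,a) = s(a,b) from Sym2.eq_swap] at h''
      exact h''
    · rw [show s(d,a) = s(a,d) from Sym2.eq_swap]
      exact hq
  rcases E6_mem_cases he with rfl|rfl|rfl|rfl|rfl|rfl <;>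
    rcases E6_mem_cases hf with rfl|rfl|rfl|rfl|rfl|rfl
  · exact hne rfl
  · exact hns (sinter_ll a b c)
  · exact hns (sinter_ll a b d)
  · exact hns (sinter_rl a b c)
  · exact hns (sinter_rl a b d)
  · exact A1 hcc
  · exact hns (sinter_ll a c b)
  · exact hne rfl
  · exact hns (sinter_ll a c d)
  · exact hns (sinter_rr a c b)
  · exact hns hx
  · exact hns (sinter_rl a c d)
  · exact hns (sinter_ll a d b)
  · exact hns (sinter_ll a d c)
  · exact hne rfl
  · exact A2 hcc.symm
  · exact hns (sinter_rr a d b)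
  · exact hns (sinter_rr a d c)
  · exact hns (sinter_lr b c a)
  · exact hns (sinter_rr b c a)
  · exact A2 hcc
  · exact hne rfl
  · exact hns (sinter_ll b c d)
  · exact hns (sinter_rl b c d)
  · exact hns (sinter_lr b d a)
  · exact hns (sinter_comm hx)
  · exact hns (sinter_rr b d a)
  · exact hns (sinter_ll b d c)
  · exact hne rfl
  · exact hns (sinter_rr b d c)
  · exact A1 hcc.symm
  · exact hns (sinter_lr c d a)
  · exact hns (sinter_rr c d a)
  · exact hns (sinter_lr c d b)
  · exact hns (sinter_rr c d b)
  · exact hne rfl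

end Aux2
section Aux3

noncomputable def col5 (a b c d : Pt) : Sym2 Pt → ℕ := fun e =>
  if e = s(a,b) ∨ e = s(b,c) then 0 else if e = s(c,d) then 1
  else if e = s(a,d) then 2 else if e = s(a,c) then 3 else 4

noncomputable def col4 (a b c d : Pt) : Sym2 Pt → ℕ := fun e =>
  if e = s(a,b) ∨ e = s(c,d) then 0 else if e = s(b,c) ∨ e = s(a,d) then 1
  else if e = s(a,c) then 2 else 3

variable {a b c d : Pt}

lemma psi_lower (hab : a ≠ b) (hac : a ≠ c) (had : a ≠ d) (hbc : b ≠ c) (hbd : b ≠ d)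
    (hcd : c ≠ d) (hx : SInter s(a,c) s(b,d)) :
    ∃ c0 : Sym2 Pt → ℕ, CompleteOn (E6 a b c d) c0 ∧ ((E6 a b c d).image c0).card = 5 := by
  refine ⟨col5 a b c d, ?_, ?_⟩
  case _ =>
    have vab : col5 a b c d s(a,b) = 0 := by simp [col5]
    have vbc : col5 a b c d s(b,c) = 0 := by simp [col5]
    have vcd : col5 a b c d s(c,d) = 1 := by
      simp [col5, Sym2.eq_iff, hab, hac, had, hbc, hbd, hcd, hab.symm, hac.symm, had.symm,
        hbc.symm, hbd.symm, hcd.symm]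
    have vad : col5 a b c d s(a,d) = 2 := by
      simp [col5, Sym2.eq_iff, hab, hac, had, hbc, hbd, hcd, hab.symm, hac.symm, had.symm,
        hbc.symm, hbd.symm, hcd.symm]
    have vac : col5 a b c d s(a,c) = 3 := by
      simp [col5, Sym2.eq_iff, hab, hac, had, hbc, hbd, hcd, hab.symm, hac.symm, had.symm,
        hbc.symm, hbd.symm, hcd.symm]
    have vbd : col5 a b c d s(b,d) = 4 := by
      simp [col5, Sym2.eq_iff, hab, hac, had, hbc, hbd, hcd, hab.symm, hac.symm, had.symm,
        hbc.symm, hbd.symm, hcd.symm]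
    have himg : (E6 a b c d).image (col5 a b c d) = ({0, 1, 2, 3, 4} : Finset ℕ) := by
      rw [show E6 a b c d = {s(a,b), s(a,c), s(a,d), s(b,c), s(b,d), s(c,d)} from rfl]
      rw [Finset.image_insert, Finset.image_insert, Finset.image_insert, Finset.image_insert,
        Finset.image_insert, Finset.image_singleton, vab, vac, vad, vbc, vbd, vcd]
      decide
    intro i hi j hj hij
    rw [himg] at hi hj
    fin_cases hi <;> fin_cases hj <;>
      first
        | exact absurd rfl hij
        | exact ⟨s(b,c), mem_bc, s(c,d), mem_cd, vbc, vcd, sinter_rl b c d⟩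
        | exact ⟨s(c,d), mem_cd, s(b,c), mem_bc, vcd, vbc, sinter_comm (sinter_rl b c d)⟩
        | exact ⟨s(a,b), mem_ab, s(a,d), mem_ad, vab, vad, sinter_ll a b d⟩
        | exact ⟨s(a,d), mem_ad, s(a,b), mem_ab, vad, vab, sinter_comm (sinter_ll a b d)⟩
        | exact ⟨s(a,b), mem_ab, s(a,c), mem_ac, vab, vac, sinter_ll a b c⟩
        | exact ⟨s(a,c), mem_ac, s(a,b), mem_ab, vac, vab, sinter_comm (sinter_ll a b c)⟩
        | exact ⟨s(a,b), mem_ab, s(b,d), mem_bd, vab, vbd, sinter_rl a b d⟩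
        | exact ⟨s(b,d), mem_bd, s(a,b), mem_ab, vbd, vab, sinter_comm (sinter_rl a b d)⟩
        | exact ⟨s(c,d), mem_cd, s(a,d), mem_ad, vcd, vad, sinter_rr c d a⟩
        | exact ⟨s(a,d), mem_ad, s(c,d), mem_cd, vad, vcd, sinter_comm (sinter_rr c d a)⟩
        | exact ⟨s(c,d), mem_cd, s(a,c), mem_ac, vcd, vac, sinter_lr c d a⟩
        | exact ⟨s(a,c), mem_ac, s(c,d), mem_cd, vac, vcd, sinter_comm (sinter_lr c d a)⟩
        | exact ⟨s(c,d), mem_cd, s(b,d), mem_bd, vcd, vbd, sinter_rr c d b⟩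
        | exact ⟨s(b,d), mem_bd, s(c,d), mem_cd, vbd, vcd, sinter_comm (sinter_rr c d b)⟩
        | exact ⟨s(a,d), mem_ad, s(a,c), mem_ac, vad, vac, sinter_ll a d c⟩
        | exact ⟨s(a,c), mem_ac, s(a,d), mem_ad, vac, vad, sinter_comm (sinter_ll a d c)⟩
        | exact ⟨s(a,d), mem_ad, s(b,d), mem_bd, vad, vbd, sinter_rr a d b⟩
        | exact ⟨s(b,d), mem_bd, s(a,d), mem_ad, vbd, vad, sinter_comm (sinter_rr a d b)⟩
        | exact ⟨s(a,c), mem_ac, s(b,d), mem_bd, vac, vbd, hx⟩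
        | exact ⟨s(b,d), mem_bd, s(a,c), mem_ac, vbd, vac, sinter_comm hx⟩
  case _ =>
    have vab : col5 a b c d s(a,b) = 0 := by simp [col5]
    have vbc : col5 a b c d s(b,c) = 0 := by simp [col5]
    have vcd : col5 a b c d s(c,d) = 1 := by
      simp [col5, Sym2.eq_iff, hab, hac, had, hbc, hbd, hcd, hab.symm, hac.symm, had.symm,
        hbc.symm, hbd.symm, hcd.symm]
    have vad : col5 a b c d s(a,d) = 2 := by
      simp [col5, Sym2.eq_iff, hab, hac, had, hbc, hbd, hcd, hab.symm, hac.symm, had.symm,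
        hbc.symm, hbd.symm, hcd.symm]
    have vac : col5 a b c d s(a,c) = 3 := by
      simp [col5, Sym2.eq_iff, hab, hac, had, hbc, hbd, hcd, hab.symm, hac.symm, had.symm,
        hbc.symm, hbd.symm, hcd.symm]
    have vbd : col5 a b c d s(b,d) = 4 := by
      simp [col5, Sym2.eq_iff, hab, hac, had, hbc, hbd, hcd, hab.symm, hac.symm, had.symm,
        hbc.symm, hbd.symm, hcd.symm]
    have himg : (E6 a b c d).image (col5 a b c d) = ({0, 1, 2, 3, 4} : Finset ℕ) := by
      rw [show E6 a b c d = {s(a,b), s(a,c), s(a,d), s(b,c), s(b,d), s(c,d)} from rfl]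
      rw [Finset.image_insert, Finset.image_insert, Finset.image_insert, Finset.image_insert,
        Finset.image_insert, Finset.image_singleton, vab, vac, vad, vbc, vbd, vcd]
      decide
    rw [himg]
    decide

lemma alpha_lower (hab : a ≠ b) (hac : a ≠ c) (had : a ≠ d) (hbc : b ≠ c) (hbd : b ≠ d)
    (hcd : c ≠ d) (hx : SInter s(a,c) s(b,d)) (hnd1 : ¬ SInter s(a,b) s(c,d))
    (hnd2 : ¬ SInter s(b,c) s(a,d)) :
    ∃ c0 : Sym2 Pt → ℕ, ProperOn (E6 a b c d) c0 ∧ CompleteOn (E6 a b c d) c0 ∧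
      ((E6 a b c d).image c0).card = 4 := by
  have vab : col4 a b c d s(a,b) = 0 := by simp [col4]
  have vcd : col4 a b c d s(c,d) = 0 := by simp [col4]
  have vbc : col4 a b c d s(b,c) = 1 := by
    simp [col4, Sym2.eq_iff, hab, hac, had, hbc, hbd, hcd, hab.symm, hac.symm, had.symm,
      hbc.symm, hbd.symm, hcd.symm]
  have vad : col4 a b c d s(a,d) = 1 := by
    simp [col4, Sym2.eq_iff, hab, hac, had, hbc, hbd, hcd, hab.symm, hac.symm, had.symm,
      hbc.symm, hbd.symm, hcd.symm]
  have vac : col4 a b c d s(a,c) = 2 := by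
    simp [col4, Sym2.eq_iff, hab, hac, had, hbc, hbd, hcd, hab.symm, hac.symm, had.symm,
      hbc.symm, hbd.symm, hcd.symm]
  have vbd : col4 a b c d s(b,d) = 3 := by
    simp [col4, Sym2.eq_iff, hab, hac, had, hbc, hbd, hcd, hab.symm, hac.symm, had.symm,
      hbc.symm, hbd.symm, hcd.symm]
  refine ⟨col4 a b c d, ?_, ?_, ?_⟩
  · intro e he f hf hne hcc
    rcases E6_mem_cases he with rfl|rfl|rfl|rfl|rfl|rfl <;>
      rcases E6_mem_cases hf with rfl|rfl|rfl|rfl|rfl|rfl <;>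
      first
        | exact absurd rfl hne
        | exact hnd1
        | exact hnd2
        | exact fun h' => hnd1 (sinter_comm h')
        | exact fun h' => hnd2 (sinter_comm h')
        | (rw [vab] at hcc; rw [vac] at hcc <;> exact absurd hcc (by decide))
        | (simp only [vab, vac, vad, vbc, vbd, vcd] at hcc; exact absurd hcc (by decide))
  · have himg : (E6 a b c d).image (col4 a b c d) = ({0, 1, 2, 3} : Finset ℕ) := by
      rw [show E6 a b c d = {s(a,b), s(a,c), s(a,d), s(b,c), s(b,d), s(c,d)} from rfl]
      rw [Finset.image_insert, Finset.image_insert, Finset.image_insert, Finset.image_insert,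
        Finset.image_insert, Finset.image_singleton, vab, vac, vad, vbc, vbd, vcd]
      decide
    intro i hi j hj hij
    rw [himg] at hi hj
    fin_cases hi <;> fin_cases hj <;>
      first
        | exact absurd rfl hij
        | exact ⟨s(a,b), mem_ab, s(b,c), mem_bc, vab, vbc, sinter_rl a b c⟩
        | exact ⟨s(b,c), mem_bc, s(a,b), mem_ab, vbc, vab, sinter_comm (sinter_rl a b c)⟩
        | exact ⟨s(a,b), mem_ab, s(a,c), mem_ac, vab, vac, sinter_ll a b c⟩
        | exact ⟨s(a,c), mem_ac, s(a,b), mem_ab, vac, vab, sinter_comm (sinter_ll a b c)⟩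
        | exact ⟨s(a,b), mem_ab, s(b,d), mem_bd, vab, vbd, sinter_rl a b d⟩
        | exact ⟨s(b,d), mem_bd, s(a,b), mem_ab, vbd, vab, sinter_comm (sinter_rl a b d)⟩
        | exact ⟨s(b,c), mem_bc, s(a,c), mem_ac, vbc, vac, sinter_rr b c a⟩
        | exact ⟨s(a,c), mem_ac, s(b,c), mem_bc, vac, vbc, sinter_comm (sinter_rr b c a)⟩
        | exact ⟨s(b,c), mem_bc, s(b,d), mem_bd, vbc, vbd, sinter_ll b c d⟩
        | exact ⟨s(b,d), mem_bd, s(b,c), mem_bc, vbd, vbc, sinter_comm (sinter_ll b c d)⟩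
        | exact ⟨s(a,c), mem_ac, s(b,d), mem_bd, vac, vbd, hx⟩
        | exact ⟨s(b,d), mem_bd, s(a,c), mem_ac, vbd, vac, sinter_comm hx⟩
  · have himg : (E6 a b c d).image (col4 a b c d) = ({0, 1, 2, 3} : Finset ℕ) := by
      rw [show E6 a b c d = {s(a,b), s(a,c), s(a,d), s(b,c), s(b,d), s(c,d)} from rfl]
      rw [Finset.image_insert, Finset.image_insert, Finset.image_insert, Finset.image_insert,
        Finset.image_insert, Finset.image_singleton, vab, vac, vad, vbc, vbd, vcd]
      decide
    rw [himg]
    decide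

end Aux3
/-- For the complete convex geometric graph on 4 vertices, the pseudoachromatic index
equals 5 and the achromatic index equals 4. -/
theorem k4_indices (S : Finset Pt) (hn : S.card = 4) (hgp : GenPos S)
    (hconv : ConvexPos S) :
    ((∃ c : Sym2 Pt → ℕ, CompleteOn (edgeSet S) c ∧ ((edgeSet S).image c).card = 5) ∧
     (∀ c : Sym2 Pt → ℕ, CompleteOn (edgeSet S) c → ((edgeSet S).image c).card ≤ 5)) ∧
    ((∃ c : Sym2 Pt → ℕ, ProperOn (edgeSet S) c ∧ CompleteOn (edgeSet S) c ∧
        ((edgeSet S).image c).card = 4) ∧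
     (∀ c : Sym2 Pt → ℕ, ProperOn (edgeSet S) c → CompleteOn (edgeSet S) c →
        ((edgeSet S).image c).card ≤ 4)) := by
  obtain ⟨a, b, c, d, hS, hab, hac, had, hbc, hbd, hcd, x, hx1, hx2⟩ := radon_label S hn hconv
  have hmemS : ∀ y : Pt, y = a ∨ y = b ∨ y = c ∨ y = d → y ∈ S := by
    intro y hy
    rw [← Finset.mem_coe, hS]
    simpa using hy
  have haS : a ∈ S := hmemS a (by tauto)
  have hbS : b ∈ S := hmemS b (by tauto)
  have hcS : c ∈ S := hmemS c (by tauto)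
  have hdS : d ∈ S := hmemS d (by tauto)
  -- nonzero determinants from general position
  have hD1 : det3 a b c ≠ 0 := fun h =>
    hgp a haS b hbS c hcS hab hbc hac (collinear_of_det3 hab h)
  have hD2 : det3 a b d ≠ 0 := fun h =>
    hgp a haS b hbS d hdS hab hbd had (collinear_of_det3 hab h)
  have hD3 : det3 a c d ≠ 0 := fun h =>
    hgp a haS c hcS d hdS hac hcd had (collinear_of_det3 hac h)
  have hD4 : det3 b c d ≠ 0 := fun h =>
    hgp b hbS c hcS d hdS hbc hcd hbd (collinear_of_det3 hbc h)
  -- crossing sign conditions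
  have ebd_a : det3 b d a = det3 a b d := by rw [det3_cyclic b d a, det3_cyclic d a b]
  have ebd_c : det3 b d c = - det3 b c d := by rw [det3_swap b d c]
  have eac_b : det3 a c b = - det3 a b c := by rw [det3_swap a c b]
  have h24' : det3 b d a * det3 b d c < 0 := by
    refine opp_side_of_cross hx1 hx2 ?_ ?_
    · rw [ebd_a]; exact hD2
    · rw [ebd_c]; simpa using hD4
  have h13' : det3 a c b * det3 a c d < 0 := by
    refine opp_side_of_cross hx2 hx1 ?_ ?_
    · rw [eac_b]; simpa using hD1
    · exact hD3
  have h13 : 0 < det3 a b c * det3 a c d := by rw [eac_b] at h13'; nlinarith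
  have h24 : 0 < det3 a b d * det3 b c d := by rw [ebd_a, ebd_c] at h24'; nlinarith
  obtain ⟨hP12, hP14⟩ := sign_products h13 h24 (det3_identity a b c d)
  have hnd1 : ¬ SInter s(a,b) s(c,d) := not_sinter_of_same_side hP12
  have hnd2 : ¬ SInter s(b,c) s(a,d) := by
    apply not_sinter_of_same_side
    have : det3 b c a = det3 a b c := by rw [det3_cyclic a b c]
    rw [this]
    exact hP14
  have hx' : SInter s(a,c) s(b,d) :=
    ⟨x, by rw [seg2_mk]; exact hx1, by rw [seg2_mk]; exact hx2⟩
  have hE6 : edgeSet S = E6 a b c d := edgeSet_eq hS hab hac had hbc hbd hcd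
  rw [hE6]
  refine ⟨⟨psi_lower hab hac had hbc hbd hcd hx', fun c0 hc0 =>
    psi_upper hab hac had hbc hbd hcd hnd1 c0 hc0⟩,
    alpha_lower hab hac had hbc hbd hcd hx' hnd1 hnd2, fun c0 hp0 hc0 =>
    alpha_upper hab hac had hbc hbd hcd hx' hnd1 hnd2 c0 hp0 hc0⟩
end
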